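/- For any eigenvalue λᵢ of P, the number −λᵢ is an eigenvalue of M if and only if there exists a nonzero vector x ∈ ℝⁿ with (P − λᵢI)x = 0 and qᵀx = 0, i.e., if and only if q is perpendicular to some nonzero null-vector of P − λᵢI. -/
import Mathlib


open Matrix Complex
open scoped Classical

noncomputable section

/-- Euclidean norm of a vector in `ℝⁿ`. -/
def euclNorm {n : ℕ} (x : Fin n → ℝ) : ℝ := Real.sqrt (x ⬝ᵥ x)

/-- The quadratic objective `f(x) = ½ xᵀPx + qᵀx`. -/
def qobj {n : ℕ} (P : Matrix (Fin n) (Fin n) ℝ) (q : Fin n → ℝ) (x : Fin n → ℝ) : ℝ :=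
  (1 / 2) * (x ⬝ᵥ P.mulVec x) + q ⬝ᵥ x

/-- The block matrix `M = [[-P, qqᵀ/r²], [I, -P]]`. -/
def trsM {n : ℕ} (P : Matrix (Fin n) (Fin n) ℝ) (q : Fin n → ℝ) (r : ℝ) :
    Matrix (Fin n ⊕ Fin n) (Fin n ⊕ Fin n) ℝ :=
  Matrix.fromBlocks (-P) ((r ^ 2)⁻¹ • Matrix.vecMulVec q q) 1 (-P)

/-- The complexification of `M`. -/
def trsMC {n : ℕ} (P : Matrix (Fin n) (Fin n) ℝ) (q : Fin n → ℝ) (r : ℝ) :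
    Matrix (Fin n ⊕ Fin n) (Fin n ⊕ Fin n) ℂ :=
  (trsM P q r).map Complex.ofReal

/-- `μ ∈ ℂ` is an eigenvalue of the complex matrix `A`. -/
def IsEig {m : Type*} [Fintype m] (A : Matrix m m ℂ) (μ : ℂ) : Prop :=
  ∃ v : m → ℂ, v ≠ 0 ∧ A.mulVec v = μ • v

/-- The secular function `s(z) = Σᵢ (wᵢᵀq)²/(λᵢ + z)² - r²` on `ℂ`. -/
def secular {n : ℕ} (lam : Fin n → ℝ) (w : Fin n → Fin n → ℝ) (q : Fin n → ℝ) (r : ℝ)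
    (z : ℂ) : ℂ :=
  (∑ i, ((w i ⬝ᵥ q : ℝ) : ℂ) ^ 2 / (((lam i : ℝ) : ℂ) + z) ^ 2) - (r : ℂ) ^ 2

/-- The secular function on `ℝ`. -/
def secularR {n : ℕ} (lam : Fin n → ℝ) (w : Fin n → Fin n → ℝ) (q : Fin n → ℝ) (r : ℝ)
    (t : ℝ) : ℝ :=
  (∑ i, (w i ⬝ᵥ q) ^ 2 / (lam i + t) ^ 2) - r ^ 2

/-- The derivative of the secular function, `s'(t) = -2 Σᵢ (wᵢᵀq)²/(λᵢ + t)³`. -/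
def secularDeriv {n : ℕ} (lam : Fin n → ℝ) (w : Fin n → Fin n → ℝ) (q : Fin n → ℝ)
    (t : ℝ) : ℝ :=
  -2 * ∑ i, (w i ⬝ᵥ q) ^ 2 / (lam i + t) ^ 3

/-- `z` is not a pole of the secular function (the poles are the `-λᵢ` with `wᵢᵀq ≠ 0`). -/
def IsNonpole {n : ℕ} (lam : Fin n → ℝ) (w : Fin n → Fin n → ℝ) (q : Fin n → ℝ) (z : ℂ) : Prop :=
  ∀ i, w i ⬝ᵥ q ≠ 0 → z ≠ -((lam i : ℝ) : ℂ)

/-- `f` has a zero of order exactly `k` at `z`. -/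
def HasZeroOfOrder (f : ℂ → ℂ) (z : ℂ) (k : ℕ) : Prop :=
  ∃ g : ℂ → ℂ, AnalyticAt ℂ g z ∧ g z ≠ 0 ∧ ∀ᶠ u in nhds z, f u = (u - z) ^ k * g u

end

section Main
open Matrix Complex

variable {n : ℕ}

/-- A real matrix has a complex eigenvector for a real eigenvalue iff it has a real one. -/
lemma isEig_map_real_iff {m : Type*} [Fintype m] (A : Matrix m m ℝ) (μ : ℝ) :
    (∃ v : m → ℂ, v ≠ 0 ∧ (A.map Complex.ofReal).mulVec v = (μ : ℂ) • v) ↔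
      ∃ v : m → ℝ, v ≠ 0 ∧ A.mulVec v = μ • v := by
  constructor
  · rintro ⟨v, hv0, hv⟩
    have hre : A.mulVec (fun k => (v k).re) = μ • fun k => (v k).re := by
      funext j
      have h := congrArg Complex.re (congrFun hv j)
      simpa [Matrix.mulVec, dotProduct, Complex.re_sum, Matrix.map_apply,
        Pi.smul_apply, Complex.re_ofReal_mul, smul_eq_mul] using h
    have him : A.mulVec (fun k => (v k).im) = μ • fun k => (v k).im := by
      funext j
      have h := congrArg Complex.im (congrFun hv j)
      simpa [Matrix.mulVec, dotProduct, Complex.im_sum, Matrix.map_apply,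
        Pi.smul_apply, Complex.im_ofReal_mul, smul_eq_mul] using h
    by_cases h0 : (fun k => (v k).re) = (0 : m → ℝ)
    · refine ⟨fun k => (v k).im, ?_, him⟩
      intro hc
      apply hv0
      funext k
      have h1 := congrFun h0 k
      have h2 := congrFun hc k
      simp only [Pi.zero_apply] at h1 h2 ⊢
      exact Complex.ext h1 h2
    · exact ⟨_, h0, hre⟩
  · rintro ⟨v, hv0, hv⟩
    refine ⟨fun k => (v k : ℂ), ?_, ?_⟩
    · intro hc
      apply hv0
      funext k
      have := congrFun hc k
      simpa using this
    · funext j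
      have h := congrFun hv j
      simp only [Matrix.mulVec, dotProduct, Pi.smul_apply, smul_eq_mul] at h ⊢
      simp only [Matrix.map_apply]
      rw [show ((μ:ℂ) * (v j : ℂ)) = ((μ * v j : ℝ) : ℂ) by push_cast; ring, ← h]
      push_cast
      ring

lemma trsM_mulVec_inl (P : Matrix (Fin n) (Fin n) ℝ) (q : Fin n → ℝ) (r : ℝ)
    (y : Fin n ⊕ Fin n → ℝ) (k : Fin n) :
    (trsM P q r).mulVec y (Sum.inl k) =
      -(P.mulVec (fun j => y (Sum.inl j)) k) + (r ^ 2)⁻¹ * (q ⬝ᵥ fun j => y (Sum.inr j)) * q k := by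
  simp only [trsM, Matrix.mulVec, dotProduct, Fintype.sum_sum_type,
    Matrix.fromBlocks_apply₁₁, Matrix.fromBlocks_apply₁₂, Matrix.vecMulVec_apply,
    Matrix.smul_apply, Matrix.neg_apply, smul_eq_mul]
  rw [Finset.mul_sum, Finset.sum_mul, ← Finset.sum_neg_distrib]
  congr 1
  · exact Finset.sum_congr rfl fun j _ => by ring
  · exact Finset.sum_congr rfl fun j _ => by ring

lemma trsM_mulVec_inr (P : Matrix (Fin n) (Fin n) ℝ) (q : Fin n → ℝ) (r : ℝ)
    (y : Fin n ⊕ Fin n → ℝ) (k : Fin n) :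
    (trsM P q r).mulVec y (Sum.inr k) =
      y (Sum.inl k) - P.mulVec (fun j => y (Sum.inr j)) k := by
  simp only [trsM, Matrix.mulVec, dotProduct, Fintype.sum_sum_type,
    Matrix.fromBlocks_apply₂₁, Matrix.fromBlocks_apply₂₂, Matrix.one_apply,
    Matrix.neg_apply, ite_mul, one_mul, zero_mul, Finset.sum_ite_eq, Finset.mem_univ, if_true]
  rw [sub_eq_add_neg, ← Finset.sum_neg_distrib]
  congr 1
  exact Finset.sum_congr rfl fun j _ => by ring

end Main

/-- for any eigenvalue `λᵢ` of `P`, `-λᵢ` is an eigenvalue of `M` iff `q` is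
perpendicular to some nonzero null-vector of `P - λᵢI`. -/
theorem stmt_11 {n : ℕ} (hn : 1 < n)
    (P : Matrix (Fin n) (Fin n) ℝ) (hP : P.IsSymm)
    (lam : Fin n → ℝ) (w : Fin n → Fin n → ℝ)
    (hmono : Monotone lam)
    (heig : ∀ i, P.mulVec (w i) = lam i • w i)
    (horth : ∀ i j, w i ⬝ᵥ w j = if i = j then (1 : ℝ) else 0)
    (q : Fin n → ℝ) (r : ℝ) (hr : 0 < r)
    (i : Fin n) :
    IsEig (trsMC P q r) (-((lam i : ℝ) : ℂ)) ↔
      ∃ x : Fin n → ℝ, x ≠ 0 ∧ P.mulVec x = lam i • x ∧ q ⬝ᵥ x = 0 := by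
  have hrr : (r : ℝ) ^ 2 ≠ 0 := pow_ne_zero 2 hr.ne'
  have hiff : IsEig (trsMC P q r) (((-lam i : ℝ)) : ℂ) ↔
      ∃ y : Fin n ⊕ Fin n → ℝ, y ≠ 0 ∧ (trsM P q r).mulVec y = (-lam i) • y :=
    isEig_map_real_iff (trsM P q r) (-lam i)
  rw [show (-((lam i : ℝ) : ℂ)) = (((-lam i : ℝ)) : ℂ) by push_cast; ring, hiff]
  constructor
  · rintro ⟨y, hy0, hy⟩
    set u : Fin n → ℝ := fun k => y (Sum.inl k) with hu
    set x : Fin n → ℝ := fun k => y (Sum.inr k) with hx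
    have e1 : ∀ k, -(P.mulVec u k) + (r ^ 2)⁻¹ * (q ⬝ᵥ x) * q k = -lam i * u k := by
      intro k
      have h := congrFun hy (Sum.inl k)
      rw [trsM_mulVec_inl P q r y k] at h
      simpa using h
    have e2 : ∀ k, u k - P.mulVec x k = -lam i * x k := by
      intro k
      have h := congrFun hy (Sum.inr k)
      rw [trsM_mulVec_inr P q r y k] at h
      simpa using h
    have hu_eq : ∀ k, u k = P.mulVec x k - lam i * x k := by
      intro k; have := e2 k; linarith
    have hkey : ∀ k, P.mulVec u k - lam i * u k = (r ^ 2)⁻¹ * (q ⬝ᵥ x) * q k := by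
      intro k; have := e1 k; linarith
    have hw : w i ᵥ* P = lam i • w i := by
      rw [← hP, Matrix.vecMul_transpose, heig i]
    have hdot : (r ^ 2)⁻¹ * ((q ⬝ᵥ x) * (w i ⬝ᵥ q)) = 0 := by
      have h1 : w i ⬝ᵥ P.mulVec u = lam i * (w i ⬝ᵥ u) := by
        rw [Matrix.dotProduct_mulVec, hw, smul_dotProduct, smul_eq_mul]
      have h2 : w i ⬝ᵥ (P.mulVec u - lam i • u) = 0 := by
        rw [dotProduct_sub, dotProduct_smul, smul_eq_mul, h1, sub_self]
      have h3 : (P.mulVec u - lam i • u) = ((r ^ 2)⁻¹ * (q ⬝ᵥ x)) • q := by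
        funext k
        simp only [Pi.sub_apply, Pi.smul_apply, smul_eq_mul]
        rw [hkey k]
      rw [h3, dotProduct_smul, smul_eq_mul] at h2
      rw [← h2]; ring
    by_cases hwq : w i ⬝ᵥ q = 0
    · refine ⟨w i, ?_, heig i, by rwa [dotProduct_comm]⟩
      intro hc
      have h := horth i i
      rw [hc] at h
      simp at h
    · have hqx : q ⬝ᵥ x = 0 := by
        have h := (mul_eq_zero.mp hdot).resolve_left (inv_ne_zero hrr)
        exact (mul_eq_zero.mp h).resolve_right hwq
      have hu2 : ∀ k, P.mulVec u k = lam i * u k := by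
        intro k; have := hkey k; rw [hqx] at this; simp at this; linarith
      have huu : u ⬝ᵥ u = 0 := by
        have hPu : P.mulVec u = lam i • u := by
          funext k; rw [hu2 k]; simp
        calc u ⬝ᵥ u = u ⬝ᵥ (P.mulVec x - lam i • x) := by
              congr 1; funext k; rw [hu_eq k]; simp
          _ = u ⬝ᵥ P.mulVec x - lam i * (u ⬝ᵥ x) := by
              rw [dotProduct_sub, dotProduct_smul, smul_eq_mul]
          _ = (u ᵥ* P) ⬝ᵥ x - lam i * (u ⬝ᵥ x) := by rw [Matrix.dotProduct_mulVec]
          _ = (P.mulVec u) ⬝ᵥ x - lam i * (u ⬝ᵥ x) := by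
              conv_lhs => rw [← hP]
              rw [Matrix.vecMul_transpose]
          _ = 0 := by rw [hPu, smul_dotProduct, smul_eq_mul]; ring
      have hu0 : u = 0 := dotProduct_self_eq_zero.mp huu
      have hx0 : x ≠ 0 := by
        intro hc
        apply hy0
        funext s
        cases s with
        | inl k => exact congrFun hu0 k
        | inr k => exact congrFun hc k
      have hPx : P.mulVec x = lam i • x := by
        funext k
        have h1 := hu_eq k
        have h2 := congrFun hu0 k
        simp only [Pi.zero_apply] at h2
        rw [h2] at h1
        simp only [Pi.smul_apply, smul_eq_mul]
        linarith
      exact ⟨x, hx0, hPx, hqx⟩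
  · rintro ⟨x, hx0, hPx, hqx⟩
    refine ⟨Sum.elim 0 x, ?_, ?_⟩
    · intro hc
      apply hx0
      funext k
      exact congrFun hc (Sum.inr k)
    · funext s
      cases s with
      | inl k =>
        rw [trsM_mulVec_inl]
        have h1 : (fun j => Sum.elim (0 : Fin n → ℝ) x (Sum.inl j)) = (0 : Fin n → ℝ) := rfl
        have h2 : (q ⬝ᵥ fun j => Sum.elim (0 : Fin n → ℝ) x (Sum.inr j)) = 0 := hqx
        rw [h1, h2]
        simp
      | inr k =>
        rw [trsM_mulVec_inr]
        have h1 : (fun j => Sum.elim (0 : Fin n → ℝ) x (Sum.inr j)) = x := rfl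
        rw [h1, hPx]
        simp
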